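/- Let U, V, W be independent with U ∼ 1/Beta(γ-λ, β+λ) - 1, V ∼ 1/Beta(λ, β), W ∼ 1/Beta(γ,β) - 1, and let (U',V') be the first two components of φ(U,V,W). Then the joint density of ((U',V'),(U,V)) is symmetric under exchanging (U,V) ↔ (U',V') (detailed balance). -/

import Mathlib

open MeasureTheory ProbabilityTheory Real

noncomputable def invBetaShiftDensity (a b : ℝ) (w : ℝ) : ℝ :=
  if 0 < w then
    Gamma (a + b) / (Gamma a * Gamma b) * (1 - 1 / (w + 1)) ^ (b - 1) * (1 / (w + 1)) ^ (a + 1)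
  else 0

noncomputable def invBetaDensity (a b : ℝ) (v : ℝ) : ℝ :=
  if 1 < v then
    Gamma (a + b) / (Gamma a * Gamma b) * (1 - 1 / v) ^ (b - 1) * (1 / v) ^ (a + 1)
  else 0

noncomputable def phi1 (U V W : ℝ) : ℝ := W + (W + 1) * U / V

noncomputable def phi2 (U V W : ℝ) : ℝ := W * V / U + W + 1

/-! ### Auxiliary: linear algebra on `ℝ × ℝ × ℝ` -/

noncomputable def e3 : (ℝ × ℝ × ℝ) ≃ₗ[ℝ] (Fin 3 → ℝ) where
  toFun p := ![p.1, p.2.1, p.2.2]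
  invFun f := (f 0, f 1, f 2)
  map_add' p q := by funext i; fin_cases i <;> simp
  map_smul' c p := by funext i; fin_cases i <;> simp
  left_inv p := by simp
  right_inv f := by funext i; fin_cases i <;> simp

noncomputable def mkCLM (M : Matrix (Fin 3) (Fin 3) ℝ) : (ℝ × ℝ × ℝ) →L[ℝ] (ℝ × ℝ × ℝ) :=
  LinearMap.toContinuousLinearMap
    (e3.symm.toLinearMap ∘ₗ (Matrix.toLin' M) ∘ₗ e3.toLinearMap)

theorem mkCLM_det (M : Matrix (Fin 3) (Fin 3) ℝ) : (mkCLM M).det = M.det := by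
  have : (mkCLM M : (ℝ×ℝ×ℝ) →ₗ[ℝ] (ℝ×ℝ×ℝ))
      = (e3.symm : (Fin 3 → ℝ) →ₗ[ℝ] (ℝ×ℝ×ℝ)) ∘ₗ (Matrix.toLin' M) ∘ₗ
        (e3.symm.symm : (ℝ×ℝ×ℝ) →ₗ[ℝ] (Fin 3 → ℝ)) := rfl
  rw [ContinuousLinearMap.det, this, LinearMap.det_conj, LinearMap.det_toLin']

theorem mkCLM_apply (M : Matrix (Fin 3) (Fin 3) ℝ) (x : ℝ × ℝ × ℝ) :
    mkCLM M x = (M 0 0 * x.1 + M 0 1 * x.2.1 + M 0 2 * x.2.2,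
      M 1 0 * x.1 + M 1 1 * x.2.1 + M 1 2 * x.2.2,
      M 2 0 * x.1 + M 2 1 * x.2.1 + M 2 2 * x.2.2) := by
  simp [mkCLM, e3, Matrix.toLin'_apply, Matrix.mulVec, dotProduct, Fin.sum_univ_three]

/-! ### The involution ψ -/

noncomputable def psi (x : ℝ × ℝ × ℝ) : ℝ × ℝ × ℝ :=
  (x.2.2 + (x.2.2 + 1) * x.1 * (x.2.1)⁻¹,
   x.2.2 * x.2.1 * (x.1)⁻¹ + x.2.2 + 1,
   x.1 * (x.2.1 - 1) * (x.1 + x.2.1)⁻¹)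

def S3 : Set (ℝ × ℝ × ℝ) := {x | 0 < x.1 ∧ 1 < x.2.1 ∧ 0 < x.2.2}

theorem measurable_psi : Measurable psi := by
  apply Measurable.prod
  · exact (measurable_snd.comp measurable_snd).add
      ((((measurable_snd.comp measurable_snd).add_const 1).mul measurable_fst).mul
        (measurable_fst.comp measurable_snd).inv)
  apply Measurable.prod
  · exact ((((measurable_snd.comp measurable_snd).mul
      (measurable_fst.comp measurable_snd)).mul measurable_fst.inv).add
        (measurable_snd.comp measurable_snd)).add_const 1
  · exact (measurable_fst.mul ((measurable_fst.comp measurable_snd).sub_const 1)).mul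
      (measurable_fst.add (measurable_fst.comp measurable_snd)).inv

theorem measurableSet_S3 : MeasurableSet S3 := by
  have h1 : MeasurableSet {x : ℝ × ℝ × ℝ | 0 < x.1} :=
    measurableSet_lt measurable_const measurable_fst
  have h2 : MeasurableSet {x : ℝ × ℝ × ℝ | 1 < x.2.1} :=
    measurableSet_lt measurable_const (measurable_fst.comp measurable_snd)
  have h3 : MeasurableSet {x : ℝ × ℝ × ℝ | 0 < x.2.2} :=
    measurableSet_lt measurable_const (measurable_snd.comp measurable_snd)
  exact (h1.inter (h2.inter h3) : _)

theorem psi_mem (x : ℝ × ℝ × ℝ) (hx : x ∈ S3) : psi x ∈ S3 := by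
  obtain ⟨hu, hv, hw⟩ := hx
  refine ⟨?_, ?_, ?_⟩
  · have : (0:ℝ) < (x.2.2 + 1) * x.1 * (x.2.1)⁻¹ := by
      have : (0:ℝ) < x.2.1 := by linarith
      positivity
    simp only [psi]; positivity
  · simp only [psi]
    have : (0:ℝ) < x.2.2 * x.2.1 * (x.1)⁻¹ := by
      have : (0:ℝ) < x.2.1 := by linarith
      positivity
    linarith
  · simp only [psi]
    have h1 : (0:ℝ) < x.2.1 - 1 := by linarith
    positivity

theorem psi_psi (x : ℝ × ℝ × ℝ) (hx : x ∈ S3) : psi (psi x) = x := by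
  obtain ⟨hu, hv, hw⟩ := hx
  obtain ⟨u, v, w⟩ := x
  simp only [S3, Set.mem_setOf_eq] at *
  have hu' : u ≠ 0 := ne_of_gt hu
  have hv' : v ≠ 0 := by positivity
  have hv1 : v - 1 ≠ 0 := by dsimp at hv ⊢; intro h; nlinarith
  have huv : u + v ≠ 0 := by positivity
  simp only [psi]
  dsimp at *
  have hA : u * w + u + v * w ≠ 0 := by nlinarith
  have h1 : w + (w + 1) * u * v⁻¹ ≠ 0 := by
    have : (0:ℝ) < (w+1)*u*v⁻¹ := by positivity
    nlinarith
  have h2 : w + (w + 1) * u * v⁻¹ + (w * v * u⁻¹ + w + 1) ≠ 0 := by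
    have a1 : (0:ℝ) < (w+1)*u*v⁻¹ := by positivity
    have a2 : (0:ℝ) ≤ w * v * u⁻¹ := by positivity
    nlinarith
  refine Prod.ext ?_ (Prod.ext ?_ ?_)
  · show _ = u
    field_simp
    ring
  · show _ = v
    field_simp
    ring
  · show _ = w
    field_simp
    ring

theorem psi_injOn : Set.InjOn psi S3 := by
  intro a ha b hb h
  have := congrArg psi h
  rwa [psi_psi a ha, psi_psi b hb] at this

theorem psi_image : psi '' S3 = S3 := by
  apply Set.Subset.antisymm
  · rintro y ⟨x, hx, rfl⟩
    exact psi_mem x hx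
  · intro y hy
    exact ⟨psi y, psi_mem y hy, psi_psi y hy⟩

/-! ### Derivative and Jacobian of ψ -/

noncomputable def psiM (x : ℝ × ℝ × ℝ) : Matrix (Fin 3) (Fin 3) ℝ :=
  !![(x.2.2 + 1) / x.2.1, -((x.2.2 + 1) * x.1 / x.2.1 ^ 2), 1 + x.1 / x.2.1;
     -(x.2.2 * x.2.1 / x.1 ^ 2), x.2.2 / x.1, x.2.1 / x.1 + 1;
     x.2.1 * (x.2.1 - 1) / (x.1 + x.2.1) ^ 2, x.1 * (x.1 + 1) / (x.1 + x.2.1) ^ 2, 0]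

theorem hasFDerivAt_psi (x : ℝ × ℝ × ℝ) (hu : 0 < x.1) (hv : 0 < x.2.1) :
    HasFDerivAt psi (mkCLM (psiM x)) x := by
  have huv : x.1 + x.2.1 ≠ 0 := by positivity
  have hu' : x.1 ≠ 0 := ne_of_gt hu
  have hv' : x.2.1 ≠ 0 := ne_of_gt hv
  have hinv1 : HasFDerivAt (fun y : ℝ × ℝ × ℝ => (y.2.1)⁻¹) _ x :=
    (hasFDerivAt_inv' (𝕜 := ℝ) hv').comp x (hasFDerivAt_snd.fst)
  have hinv2 : HasFDerivAt (fun y : ℝ × ℝ × ℝ => (y.1)⁻¹) _ x :=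
    (hasFDerivAt_inv' (𝕜 := ℝ) hu').comp x hasFDerivAt_fst
  have hinv3 : HasFDerivAt (fun y : ℝ × ℝ × ℝ => (y.1 + y.2.1)⁻¹) _ x :=
    (hasFDerivAt_inv' (𝕜 := ℝ) huv).comp x (hasFDerivAt_fst.add (hasFDerivAt_snd.fst))
  have h1 : HasFDerivAt (fun y : ℝ × ℝ × ℝ => y.2.2 + (y.2.2 + 1) * y.1 * (y.2.1)⁻¹) _ x :=
    (hasFDerivAt_snd.snd).add
      ((((hasFDerivAt_snd.snd).add_const 1).mul hasFDerivAt_fst).mul hinv1)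
  have h2 : HasFDerivAt (fun y : ℝ × ℝ × ℝ => y.2.2 * y.2.1 * (y.1)⁻¹ + y.2.2 + 1) _ x :=
    ((((hasFDerivAt_snd.snd).mul (hasFDerivAt_snd.fst)).mul hinv2).add
      (hasFDerivAt_snd.snd)).add_const 1
  have h3 : HasFDerivAt (fun y : ℝ × ℝ × ℝ => y.1 * (y.2.1 - 1) * (y.1 + y.2.1)⁻¹) _ x :=
    ((hasFDerivAt_fst.mul ((hasFDerivAt_snd.fst).sub_const 1)).mul hinv3)
  have H := h1.prodMk (h2.prodMk h3)
  refine H.congr_fderiv ?_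
  apply ContinuousLinearMap.ext
  intro y
  rw [mkCLM_apply]
  simp only [ContinuousLinearMap.prod_apply, ContinuousLinearMap.add_apply,
    ContinuousLinearMap.coe_comp', Function.comp_apply, ContinuousLinearMap.smul_apply,
    ContinuousLinearMap.coe_fst', ContinuousLinearMap.coe_snd',
    ContinuousLinearMap.neg_apply, ContinuousLinearMap.mulLeftRight_apply,
    ContinuousLinearMap.coe_sub', Pi.sub_apply, Pi.mul_apply, smul_eq_mul, psiM,
    Matrix.cons_val', Matrix.cons_val_zero, Matrix.cons_val_one, Matrix.head_cons,
    Matrix.empty_val', Matrix.cons_val_fin_one, Matrix.head_fin_const, Matrix.of_apply,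
    Matrix.cons_val_two, Matrix.tail_cons]
  refine Prod.ext ?_ (Prod.ext ?_ ?_)
  · show _ = _
    field_simp
    ring
  · show _ = _
    field_simp
    ring
  · show _ = _
    field_simp
    ring

theorem psiM_det (x : ℝ × ℝ × ℝ) (hu : 0 < x.1) (hv : 1 < x.2.1) :
    (mkCLM (psiM x)).det
      = -((x.1 * x.2.2 + x.1 + x.2.1 * x.2.2) / (x.1 * x.2.1)) := by
  obtain ⟨u, v, w⟩ := x
  dsimp at *
  have hv0 : (0:ℝ) < v := by linarith
  have huv : (0:ℝ) < u + v := by linarith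
  rw [mkCLM_det, psiM, Matrix.det_fin_three]
  simp only [Matrix.cons_val', Matrix.cons_val_zero, Matrix.cons_val_one, Matrix.head_cons,
    Matrix.empty_val', Matrix.cons_val_fin_one, Matrix.head_fin_const, Matrix.of_apply,
    Matrix.cons_val_two, Matrix.tail_cons]
  field_simp
  ring

/-! ### The density identity -/

theorem pow_identity (γ β lam u v w : ℝ) (hu : 0 < u) (hv : 1 < v) (hw : 0 < w) :
    ((u*w + u + v*w) / ((u+v)*(w+1))) ^ (β + lam - 1) * (v / ((u+v)*(w+1))) ^ (γ - lam + 1)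
    * ((w*(u+v)) / (u*w + u + v*w)) ^ (β - 1) * (u / (u*w + u + v*w)) ^ (lam + 1)
    * ((u*(v-1)) / (v*(u+1))) ^ (β - 1) * ((u+v) / (v*(u+1))) ^ (γ + 1)
    * ((u*w + u + v*w) / (u*v))
    = (u / (u+1)) ^ (β + lam - 1) * (1 / (u+1)) ^ (γ - lam + 1)
    * ((v-1) / v) ^ (β - 1) * (1 / v) ^ (lam + 1)
    * (w / (w+1)) ^ (β - 1) * (1 / (w+1)) ^ (γ + 1) := by
  have hv0 : (0:ℝ) < v := by linarith
  have hv1 : (0:ℝ) < v - 1 := by linarith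
  have hu1 : (0:ℝ) < u + 1 := by linarith
  have huv : (0:ℝ) < u + v := by linarith
  have hw1 : (0:ℝ) < w + 1 := by linarith
  have hA : (0:ℝ) < u*w + u + v*w := by positivity
  rw [Real.rpow_def_of_pos (by positivity), Real.rpow_def_of_pos (by positivity),
    Real.rpow_def_of_pos (by positivity), Real.rpow_def_of_pos (by positivity),
    Real.rpow_def_of_pos (by positivity), Real.rpow_def_of_pos (by positivity),
    Real.rpow_def_of_pos (by positivity), Real.rpow_def_of_pos (by positivity),
    Real.rpow_def_of_pos (by positivity), Real.rpow_def_of_pos (by positivity),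
    Real.rpow_def_of_pos (by positivity), Real.rpow_def_of_pos (by positivity),
    ← Real.exp_log (show (0:ℝ) < (u*w + u + v*w) / (u*v) by positivity)]
  simp only [← Real.exp_add]
  rw [Real.exp_eq_exp]
  rw [Real.log_div hA.ne' (by positivity), Real.log_div hv0.ne' (by positivity),
    Real.log_div (by positivity) hA.ne', Real.log_div hu.ne' hA.ne',
    Real.log_div (by positivity) (by positivity), Real.log_div huv.ne' (by positivity),
    Real.log_div hA.ne' (by positivity), Real.log_div hu.ne' hu1.ne',
    Real.log_div one_ne_zero hu1.ne', Real.log_div hv1.ne' hv0.ne',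
    Real.log_div one_ne_zero hv0.ne', Real.log_div hw.ne' hw1.ne',
    Real.log_div one_ne_zero hw1.ne',
    Real.log_mul huv.ne' hw1.ne', Real.log_mul hw.ne' huv.ne',
    Real.log_mul hu.ne' hv1.ne', Real.log_mul hv0.ne' hu1.ne',
    Real.log_mul hu.ne' hv0.ne', Real.log_one]
  ring

theorem density_identity (γ β lam : ℝ) (x : ℝ × ℝ × ℝ) (hx : x ∈ S3) :
    invBetaShiftDensity (γ - lam) (β + lam) (psi x).1
      * (invBetaDensity lam β (psi x).2.1 * invBetaShiftDensity γ β (psi x).2.2)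
      * ((x.1 * x.2.2 + x.1 + x.2.1 * x.2.2) / (x.1 * x.2.1))
    = invBetaShiftDensity (γ - lam) (β + lam) x.1
      * (invBetaDensity lam β x.2.1 * invBetaShiftDensity γ β x.2.2) := by
  obtain ⟨hp1, hp2, hp3⟩ := psi_mem x hx
  obtain ⟨hu, hv, hw⟩ := hx
  obtain ⟨u, v, w⟩ := x
  simp only [S3, Set.mem_setOf_eq, psi] at *
  have hv0 : (0:ℝ) < v := by linarith
  have hv1 : (0:ℝ) < v - 1 := by linarith
  have hu1 : (0:ℝ) < u + 1 := by linarith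
  have huv : (0:ℝ) < u + v := by linarith
  have hw1 : (0:ℝ) < w + 1 := by linarith
  have hA : (0:ℝ) < u*w + u + v*w := by positivity
  have hd1 : w + (w + 1) * u * v⁻¹ + 1 ≠ 0 := by positivity
  have hd2 : w * v * u⁻¹ + w + 1 ≠ 0 := by positivity
  have hd3 : u * (v - 1) * (u + v)⁻¹ + 1 ≠ 0 := by positivity
  have e1 : 1 - 1 / (w + (w + 1) * u * v⁻¹ + 1) = (u*w + u + v*w) / ((u+v)*(w+1)) := by
    rw [eq_div_iff (by positivity)]
    field_simp
    try ring
    try tauto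
  have e2 : 1 / (w + (w + 1) * u * v⁻¹ + 1) = v / ((u+v)*(w+1)) := by
    rw [eq_div_iff (by positivity)]
    field_simp
    try ring
    try tauto
  have e3 : 1 - 1 / (w * v * u⁻¹ + w + 1) = (w*(u+v)) / (u*w + u + v*w) := by
    rw [eq_div_iff (by positivity)]
    field_simp
    try ring
    try tauto
  have e4 : 1 / (w * v * u⁻¹ + w + 1) = u / (u*w + u + v*w) := by
    rw [eq_div_iff (by positivity)]
    field_simp
    try ring
    try tauto
  have e5 : 1 - 1 / (u * (v - 1) * (u + v)⁻¹ + 1) = (u*(v-1)) / (v*(u+1)) := by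
    rw [eq_div_iff (by positivity)]
    field_simp
    try ring
    try tauto
  have e6 : 1 / (u * (v - 1) * (u + v)⁻¹ + 1) = (u+v) / (v*(u+1)) := by
    rw [eq_div_iff (by positivity)]
    field_simp
    try ring
    try tauto
  have e7 : 1 - 1 / (u + 1) = u / (u+1) := by
    field_simp
    ring
  have e8 : 1 - 1 / v = (v-1) / v := by
    field_simp
  have e9 : 1 - 1 / (w + 1) = w / (w+1) := by
    field_simp
    ring
  rw [invBetaShiftDensity, invBetaShiftDensity, invBetaShiftDensity, invBetaShiftDensity,
    invBetaDensity, invBetaDensity, if_pos hp1, if_pos hp2, if_pos hp3, if_pos hu, if_pos hv,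
    if_pos hw, e1, e2, e3, e4, e5, e6, e7, e8, e9]
  have PI := pow_identity γ β lam u v w hu hv hw
  linear_combination (Gamma (γ - lam + (β + lam)) / (Gamma (γ - lam) * Gamma (β + lam)))
    * (Gamma (lam + β) / (Gamma lam * Gamma β)) * (Gamma (γ + β) / (Gamma γ * Gamma β)) * PI

theorem invBetaShiftDensity_nonneg (a b : ℝ) (ha : 0 < a) (hb : 0 < b) (t : ℝ) :
    0 ≤ invBetaShiftDensity a b t := by
  rw [invBetaShiftDensity]
  split_ifs with h
  · have h1 : 0 < Gamma (a + b) := Real.Gamma_pos_of_pos (by linarith)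
    have h2 : 0 < Gamma a := Real.Gamma_pos_of_pos ha
    have h3 : 0 < Gamma b := Real.Gamma_pos_of_pos hb
    have h4 : (0:ℝ) ≤ 1 - 1 / (t + 1) := by
      rw [sub_nonneg, div_le_one (by linarith)]
      linarith
    have h5 : (0:ℝ) ≤ 1 / (t + 1) := by positivity
    positivity
  · exact le_refl 0

theorem invBetaDensity_nonneg (a b : ℝ) (ha : 0 < a) (hb : 0 < b) (t : ℝ) :
    0 ≤ invBetaDensity a b t := by
  rw [invBetaDensity]
  split_ifs with h
  · have h1 : 0 < Gamma (a + b) := Real.Gamma_pos_of_pos (by linarith)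
    have h2 : 0 < Gamma a := Real.Gamma_pos_of_pos ha
    have h3 : 0 < Gamma b := Real.Gamma_pos_of_pos hb
    have h4 : (0:ℝ) ≤ 1 - 1 / t := by
      rw [sub_nonneg, div_le_one (by linarith)]
      linarith
    have h5 : (0:ℝ) ≤ 1 / t := by
      have : (0:ℝ) < t := by linarith
      positivity
    positivity
  · exact le_refl 0

theorem invBetaShiftDensity_eq_zero (a b t : ℝ) (ht : ¬ 0 < t) :
    invBetaShiftDensity a b t = 0 := by
  rw [invBetaShiftDensity, if_neg ht]

theorem invBetaDensity_eq_zero (a b t : ℝ) (ht : ¬ 1 < t) :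
    invBetaDensity a b t = 0 := by
  rw [invBetaDensity, if_neg ht]

theorem measurable_invBetaShiftDensity (a b : ℝ) : Measurable (invBetaShiftDensity a b) := by
  unfold invBetaShiftDensity
  refine Measurable.ite (measurableSet_lt measurable_const measurable_id) ?_ measurable_const
  exact ((measurable_const.mul
      (((measurable_const.sub ((measurable_id.add_const 1).const_div 1))).pow_const _))).mul
    (((measurable_id.add_const 1).const_div 1).pow_const _)

theorem measurable_invBetaDensity (a b : ℝ) : Measurable (invBetaDensity a b) := by
  unfold invBetaDensity
  refine Measurable.ite (measurableSet_lt measurable_const measurable_id) ?_ measurable_const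
  exact ((measurable_const.mul
      (((measurable_const.sub (measurable_id.const_div 1))).pow_const _))).mul
    ((measurable_id.const_div 1).pow_const _)

/-! ### The density on `ℝ × ℝ × ℝ` and measure preservation -/

noncomputable def rho3 (γ β lam : ℝ) (x : ℝ × ℝ × ℝ) : ℝ :=
  invBetaShiftDensity (γ - lam) (β + lam) x.1
    * (invBetaDensity lam β x.2.1 * invBetaShiftDensity γ β x.2.2)

theorem measurable_rho3 (γ β lam : ℝ) : Measurable (rho3 γ β lam) := by
  unfold rho3
  exact ((measurable_invBetaShiftDensity _ _).comp measurable_fst).mul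
    ((((measurable_invBetaDensity _ _).comp (measurable_fst.comp measurable_snd))).mul
      ((measurable_invBetaShiftDensity _ _).comp (measurable_snd.comp measurable_snd)))

theorem rho3_eq_zero (γ β lam : ℝ) (x : ℝ × ℝ × ℝ) (hx : x ∉ S3) : rho3 γ β lam x = 0 := by
  unfold rho3
  simp only [S3, Set.mem_setOf_eq, not_and_or, not_lt] at hx
  rcases hx with h | h | h
  · rw [invBetaShiftDensity_eq_zero _ _ _ (not_lt.mpr h), zero_mul]
  · rw [invBetaDensity_eq_zero _ _ _ (not_lt.mpr h), zero_mul, mul_zero]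
  · rw [invBetaShiftDensity_eq_zero _ _ _ (not_lt.mpr h), mul_zero, mul_zero]

theorem rho3_nonneg (γ β lam : ℝ) (hβ : 0 < β) (hlam : 0 < lam) (hlamγ : lam < γ)
    (x : ℝ × ℝ × ℝ) : 0 ≤ rho3 γ β lam x := by
  unfold rho3
  have h1 := invBetaShiftDensity_nonneg (γ - lam) (β + lam) (by linarith) (by linarith) x.1
  have h2 := invBetaDensity_nonneg lam β hlam hβ x.2.1
  have h3 := invBetaShiftDensity_nonneg γ β (by linarith) hβ x.2.2
  positivity

theorem map_psi_eq (γ β lam : ℝ) (hβ : 0 < β) (hlam : 0 < lam) (hlamγ : lam < γ) :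
    ((volume : Measure (ℝ × ℝ × ℝ)).withDensity
        fun x => ENNReal.ofReal (rho3 γ β lam x)).map psi
      = (volume : Measure (ℝ × ℝ × ℝ)).withDensity fun x => ENNReal.ofReal (rho3 γ β lam x) := by
  set ρ : (ℝ × ℝ × ℝ) → ENNReal := fun x => ENNReal.ofReal (rho3 γ β lam x) with hρ
  have hρm : Measurable ρ := (measurable_rho3 γ β lam).ennreal_ofReal
  have hind : ∀ (B : Set (ℝ × ℝ × ℝ)), MeasurableSet B →
      ∫⁻ x in B, ρ x = ∫⁻ x in S3, B.indicator ρ x := by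
    intro B hB
    rw [← lintegral_indicator hB, ← lintegral_indicator measurableSet_S3]
    congr 1
    funext x
    by_cases hx : x ∈ S3
    · rw [Set.indicator_of_mem hx]
    · rw [Set.indicator_of_notMem hx]
      by_cases hxB : x ∈ B
      · rw [Set.indicator_of_mem hxB, hρ]
        simp [rho3_eq_zero γ β lam x hx]
      · rw [Set.indicator_of_notMem hxB]
  haveI h2d : Measure.IsAddHaarMeasure (volume : Measure (ℝ×ℝ)) := by
    rw [Measure.volume_eq_prod]; infer_instance
  haveI h3d : Measure.IsAddHaarMeasure (volume : Measure (ℝ×ℝ×ℝ)) := by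
    rw [Measure.volume_eq_prod]; infer_instance
  ext A hA
  rw [Measure.map_apply measurable_psi hA,
    withDensity_apply _ (measurable_psi hA), withDensity_apply _ hA,
    hind _ (measurable_psi hA), hind _ hA]
  -- change of variables on the right-hand side
  have hder : ∀ x ∈ S3, HasFDerivWithinAt psi (mkCLM (psiM x)) S3 x := fun x hx =>
    (hasFDerivAt_psi x hx.1 (lt_trans one_pos hx.2.1)).hasFDerivWithinAt
  have hcov := lintegral_image_eq_lintegral_abs_det_fderiv_mul (volume : Measure (ℝ × ℝ × ℝ))
    measurableSet_S3 hder psi_injOn (A.indicator ρ)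
  rw [psi_image] at hcov
  rw [hcov]
  apply setLIntegral_congr_fun measurableSet_S3
  intro x hx
  obtain ⟨hu, hv, hw⟩ := hx
  have hdet : |(mkCLM (psiM x)).det|
      = (x.1 * x.2.2 + x.1 + x.2.1 * x.2.2) / (x.1 * x.2.1) := by
    rw [psiM_det x hu hv, abs_neg, abs_of_nonneg]
    have h1 : (0:ℝ) < x.2.1 := lt_trans one_pos hv
    positivity
  have key : ENNReal.ofReal |(mkCLM (psiM x)).det| * ρ (psi x) = ρ x := by
    rw [hρ]
    dsimp only
    rw [← ENNReal.ofReal_mul (abs_nonneg _), hdet]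
    congr 1
    have hdi := density_identity γ β lam x ⟨hu, hv, hw⟩
    unfold rho3
    linear_combination hdi
  beta_reduce
  by_cases hxA : psi x ∈ A
  · rw [Set.indicator_of_mem hxA, Set.indicator_of_mem (show x ∈ psi ⁻¹' A from hxA)]
    exact key.symm
  · rw [Set.indicator_of_notMem hxA, Set.indicator_of_notMem
      (show x ∉ psi ⁻¹' A from hxA), mul_zero]

/-! ### Product of withDensity measures -/

theorem wd_prod {α β' : Type*} [MeasurableSpace α] [MeasurableSpace β']
    (μ : Measure α) (ν : Measure β') (f : α → ENNReal) (g : β' → ENNReal)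
    (hf : Measurable f) (hg : Measurable g)
    [SigmaFinite (μ.withDensity f)] [SigmaFinite (ν.withDensity g)]
    [SigmaFinite μ] [SigmaFinite ν] :
    (μ.withDensity f).prod (ν.withDensity g)
      = (μ.prod ν).withDensity (fun z => f z.1 * g z.2) := by
  refine Measure.prod_eq (μ := μ.withDensity f) (ν := ν.withDensity g) (fun s t hs ht => ?_)
  rw [withDensity_apply _ (hs.prod ht), withDensity_apply _ hs, withDensity_apply _ ht,
    ← Measure.prod_restrict, lintegral_prod_mul (hf.aemeasurable) (hg.aemeasurable)]

/-! ### Main theorem -/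

/-- Detailed balance for the Inverse-Beta stationary measure: with `U, V, W` independent,
`U ∼ 1/Beta(γ-λ,β+λ) - 1`, `V ∼ 1/Beta(λ,β)`, `W ∼ 1/Beta(γ,β) - 1`, and
`(U',V')` the first two components of `φ(U,V,W)`, the joint law of `((U',V'),(U,V))` is
symmetric under exchanging `(U,V) ↔ (U',V')`. -/
theorem phiIB_detailed_balance
    {Ω : Type*} [MeasurableSpace Ω] (P : Measure Ω) [IsProbabilityMeasure P]
    (γ β lam : ℝ) (hβ : 0 < β) (hlam : 0 < lam) (hlamγ : lam < γ)
    (U V W : Ω → ℝ) (hU : Measurable U) (hV : Measurable V) (hW : Measurable W)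
    (hindep : iIndepFun ![U, V, W] P)
    (hlawU : P.map U =
      volume.withDensity fun x => ENNReal.ofReal (invBetaShiftDensity (γ - lam) (β + lam) x))
    (hlawV : P.map V =
      volume.withDensity fun x => ENNReal.ofReal (invBetaDensity lam β x))
    (hlawW : P.map W =
      volume.withDensity fun x => ENNReal.ofReal (invBetaShiftDensity γ β x)) :
    P.map (fun ω => ((phi1 (U ω) (V ω) (W ω), phi2 (U ω) (V ω) (W ω)), (U ω, V ω)))
      = P.map (fun ω => ((U ω, V ω), (phi1 (U ω) (V ω) (W ω), phi2 (U ω) (V ω) (W ω)))) := by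
  have hmeas3 : ∀ i, Measurable (![U, V, W] i) := by
    intro i
    fin_cases i <;> simpa
  -- independence decompositions
  have hVW : IndepFun V W P := by
    have := hindep.indepFun (i := 1) (j := 2) (by decide)
    simpa using this
  have hUVW : IndepFun U (fun ω => (V ω, W ω)) P := by
    have := (hindep.indepFun_prodMk hmeas3 1 2 0 (by decide) (by decide)).symm
    simpa using this
  -- joint law of (U,(V,W))
  have hmapVW : P.map (fun ω => (V ω, W ω)) = (P.map V).prod (P.map W) :=
    (indepFun_iff_map_prod_eq_prod_map_map hV.aemeasurable hW.aemeasurable).mp hVW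
  have hmapX : P.map (fun ω => (U ω, (V ω, W ω)))
      = (P.map U).prod ((P.map V).prod (P.map W)) := by
    rw [← hmapVW]
    exact (indepFun_iff_map_prod_eq_prod_map_map hU.aemeasurable
      ((hV.prodMk hW).aemeasurable)).mp hUVW
  -- identify the joint law with the density measure μ3
  set ρ : (ℝ × ℝ × ℝ) → ENNReal := fun x => ENNReal.ofReal (rho3 γ β lam x) with hρdef
  have hnnU := invBetaShiftDensity_nonneg (γ - lam) (β + lam)
    (by linarith) (by linarith)
  have hnnV := invBetaDensity_nonneg lam β hlam hβ
  have hnnW := invBetaShiftDensity_nonneg γ β (by linarith) hβ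
  have hlaw3 : P.map (fun ω => (U ω, (V ω, W ω)))
      = (volume : Measure (ℝ × ℝ × ℝ)).withDensity ρ := by
    rw [hmapX, hlawU, hlawV, hlawW]
    rw [wd_prod _ _ _ _ (measurable_invBetaDensity lam β).ennreal_ofReal
      (measurable_invBetaShiftDensity γ β).ennreal_ofReal]
    have hmid : ((volume : Measure ℝ).prod (volume : Measure ℝ)).withDensity
          (fun z => ENNReal.ofReal (invBetaDensity lam β z.1)
            * ENNReal.ofReal (invBetaShiftDensity γ β z.2))
        = (volume : Measure (ℝ × ℝ)).withDensity
          (fun z => ENNReal.ofReal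
            (invBetaDensity lam β z.1 * invBetaShiftDensity γ β z.2)) := by
      rw [← Measure.volume_eq_prod]
      congr 1
      funext z
      rw [ENNReal.ofReal_mul (hnnV z.1)]
    rw [hmid]
    rw [wd_prod (volume : Measure ℝ) (volume : Measure (ℝ × ℝ))
      (fun x => ENNReal.ofReal (invBetaShiftDensity (γ - lam) (β + lam) x))
      (fun z => ENNReal.ofReal (invBetaDensity lam β z.1 * invBetaShiftDensity γ β z.2))
      (measurable_invBetaShiftDensity (γ - lam) (β + lam)).ennreal_ofReal
      (by exact (((measurable_invBetaDensity lam β).comp measurable_fst).mul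
        ((measurable_invBetaShiftDensity γ β).comp measurable_snd)).ennreal_ofReal)]
    rw [← Measure.volume_eq_prod]
    congr 1
    funext z
    rw [hρdef]
    unfold rho3
    exact (ENNReal.ofReal_mul (hnnU z.1)).symm
  -- the two projection maps
  set T : (ℝ × ℝ × ℝ) → (ℝ × ℝ) × (ℝ × ℝ) :=
    fun x => (((psi x).1, (psi x).2.1), (x.1, x.2.1)) with hT
  set T' : (ℝ × ℝ × ℝ) → (ℝ × ℝ) × (ℝ × ℝ) :=
    fun x => ((x.1, x.2.1), ((psi x).1, (psi x).2.1)) with hT'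
  have hTm : Measurable T :=
    ((measurable_psi.fst).prodMk ((measurable_fst.comp measurable_snd).comp measurable_psi)).prodMk
      (measurable_fst.prodMk (measurable_fst.comp measurable_snd))
  have hT'm : Measurable T' :=
    (measurable_fst.prodMk (measurable_fst.comp measurable_snd)).prodMk
      ((measurable_psi.fst).prodMk ((measurable_fst.comp measurable_snd).comp measurable_psi))
  have hXm : Measurable (fun ω => (U ω, (V ω, W ω))) := hU.prodMk (hV.prodMk hW)
  -- rewrite goal through T and T'
  have hgoalL : (fun ω => ((phi1 (U ω) (V ω) (W ω), phi2 (U ω) (V ω) (W ω)), (U ω, V ω)))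
      = T ∘ (fun ω => (U ω, (V ω, W ω))) := by
    funext ω
    simp only [T, psi, phi1, phi2, Function.comp_apply, div_eq_mul_inv]
  have hgoalR : (fun ω => ((U ω, V ω), (phi1 (U ω) (V ω) (W ω), phi2 (U ω) (V ω) (W ω))))
      = T' ∘ (fun ω => (U ω, (V ω, W ω))) := by
    funext ω
    simp only [T', psi, phi1, phi2, Function.comp_apply, div_eq_mul_inv]
  rw [hgoalL, hgoalR, ← Measure.map_map hTm hXm, ← Measure.map_map hT'm hXm, hlaw3]
  -- a.e. identity T' = T ∘ psi
  have hSae : S3 ∈ ae ((volume : Measure (ℝ × ℝ × ℝ)).withDensity ρ) := by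
    rw [mem_ae_iff, withDensity_apply _ measurableSet_S3.compl]
    rw [setLIntegral_congr_fun measurableSet_S3.compl
      (fun x hx => ?_), lintegral_zero]
    rw [hρdef]
    simp [rho3_eq_zero γ β lam x hx]
  have hae : T' =ᵐ[(volume : Measure (ℝ × ℝ × ℝ)).withDensity ρ] (T ∘ psi) := by
    filter_upwards [hSae] with x hx
    simp only [T, T', Function.comp_apply, psi_psi x hx]
  rw [Measure.map_congr hae, ← Measure.map_map hTm measurable_psi,
    map_psi_eq γ β lam hβ hlam hlamγ]
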